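/- Let ℏ ∈ ℂ, let g : Fin 2 → Fin 2 → ℂ (g(a, b) representing the Kähler metric component g_{a b̄} = g_{b̄ a} of a two-dimensional locally symmetric Kähler manifold), and let R : Fin 2 × Fin 2 × Fin 2 × Fin 2 → ℂ (R(p, c, d, i) representing the curvature component R_{p̄}^{c̄ d̄}_{ī}) satisfy the Kähler curvature symmetries R(p, c, d, i) = R(i, c, d, p) and R(p, c, d, i) = R(p, d, c, i). Let T assign a complex number T(α, β) to each pair of multi-indices α, β : Fin 2 → ℕ of weight |α| = |β| = 2, with the convention that T at any multi-index with a negative component is 0, and set T¹(e_a, e_b) := ℏ · g(a, b). Assume that for every i ∈ {1, 2} and all multi-indices α, β with |α| = |β| = 2 the second-order recurrence relation holds: Σ_{d=1}^{2} ℏ g(d, i) · T¹(α − e_d, β − e_i) = β_i T(α, β) + Σ_{k=1}^{2} Σ_{p=1}^{2} (ℏ/2)(β_k − δ_{kp} − δ_{ik} + 1)(β_k − δ_{kp} − δ_{ik} + 2) R(p, k, k, i) T(α, β − e_p + 2e_k − e_i) + Σ_{p=1}^{2} ℏ (β_1 − δ_{1p} − δ_{i1} + 1)(β_2 − δ_{2p}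 − δ_{i2} + 1) R(p, 2, 1, i) T(α, β − e_p + e_1 + e_2 − e_i). Let 𝒞 be the 3×3 complex matrix 𝒞 = [[2 + ℏR(1,1,1,1), ℏR(2,1,1,1), ℏR(2,1,1,2)], [ℏR(1,2,1,1), 1 + ℏR(2,2,1,1), ℏR(2,2,1,2)], [ℏR(1,2,2,1), ℏR(2,2,2,1), 2 + ℏR(2,2,2,2)]] and 𝔊 the 3×3 matrix 𝔊 = [[g(1,1)², g(1,1)g(1,2), g(1,2)²], [2 g(1,1)g(2,1), g(1,2)g(2,1) + g(1,1)g(2,2), 2 g(1,2)g(2,2)], [g(2,1)², g(2,1)g(2,2), g(2,2)²]]. If 𝒞 is invertible, then the 3×3 matrix 𝒯 with rows indexed by α ∈ {(2,0), (1,1), (0,2)} and columns by β ∈ {(2,0), (1,1), (0,2)} and entries 𝒯_{α,β} = T(α, β) satisfies 𝒯 = ℏ² · 𝔊 · 𝒞⁻¹. -/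

import Mathlib

open Finset Matrix

/-- Kronecker delta, valued in `ℂ`. -/
def kdel {ι : Type*} [DecidableEq ι] (a b : ι) : ℂ := if a = b then 1 else 0

/-- The standard basis multi-index `e_a`, as an integer vector. -/
def eZ (a : Fin 2) : Fin 2 → ℤ := fun t => if t = a then 1 else 0

/-- The first-order coefficients `T¹`, supported on pairs of standard basis vectors,
with `T¹(e_a, e_b) = ℏ · g a b` (and `0` elsewhere, in particular on any argument with a
negative component). -/
noncomputable def T1 (ℏ : ℂ) (g : Fin 2 → Fin 2 → ℂ) (v w : Fin 2 → ℤ) : ℂ :=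
  ∑ a : Fin 2, ∑ b : Fin 2, if v = eZ a ∧ w = eZ b then ℏ * g a b else 0

/-- The 3×3 matrix `𝒞` of the paper (indices shifted: paper's `1, 2` are `0, 1`). -/
noncomputable def matC (ℏ : ℂ) (R : Fin 2 × Fin 2 × Fin 2 × Fin 2 → ℂ) :
    Matrix (Fin 3) (Fin 3) ℂ :=
  !![2 + ℏ * R (0, 0, 0, 0), ℏ * R (1, 0, 0, 0), ℏ * R (1, 0, 0, 1);
     ℏ * R (0, 1, 0, 0), 1 + ℏ * R (1, 1, 0, 0), ℏ * R (1, 1, 0, 1);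
     ℏ * R (0, 1, 1, 0), ℏ * R (1, 1, 1, 0), 2 + ℏ * R (1, 1, 1, 1)]

/-- The 3×3 matrix `𝔊` of the paper, built out of the metric components. -/
noncomputable def matG (g : Fin 2 → Fin 2 → ℂ) : Matrix (Fin 3) (Fin 3) ℂ :=
  !![g 0 0 ^ 2, g 0 0 * g 0 1, g 0 1 ^ 2;
     2 * g 0 0 * g 1 0, g 0 1 * g 1 0 + g 0 0 * g 1 1, 2 * g 0 1 * g 1 1;
     g 1 0 ^ 2, g 1 0 * g 1 1, g 1 1 ^ 2]

/-- The weight-two multi-indices `(2,0), (1,1), (0,2)`, in this order. -/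
def m2 : Fin 3 → Fin 2 → ℤ := ![![2, 0], ![1, 1], ![0, 2]]

lemma vV1 (a b : ℕ) : (fun t => ((![a,b] : Fin 2 → ℕ) t : ℤ)) = ![(a:ℤ), (b:ℤ)] := by
  funext t; fin_cases t <;> simp

lemma vV2 (a b : ℕ) (d : Fin 2) :
    (fun t => ((![a,b] : Fin 2 → ℕ) t : ℤ) - eZ d t) = ![(a:ℤ) - eZ d 0, (b:ℤ) - eZ d 1] := by
  funext t; fin_cases t <;> simp

lemma vV3 (a b : ℕ) (p k i : Fin 2) :
    (fun t => ((![a,b] : Fin 2 → ℕ) t : ℤ) - eZ p t + 2 * eZ k t - eZ i t) =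
      ![(a:ℤ) - eZ p 0 + 2 * eZ k 0 - eZ i 0, (b:ℤ) - eZ p 1 + 2 * eZ k 1 - eZ i 1] := by
  funext t; fin_cases t <;> simp

lemma vV4 (a b : ℕ) (p i : Fin 2) :
    (fun t => ((![a,b] : Fin 2 → ℕ) t : ℤ) - eZ p t + eZ 0 t + eZ 1 t - eZ i t) =
      ![(a:ℤ) - eZ p 0 + eZ 0 0 + eZ 1 0 - eZ i 0, (b:ℤ) - eZ p 1 + eZ 0 1 + eZ 1 1 - eZ i 1] := by
  funext t; fin_cases t <;> simp

lemma e00 : eZ 0 0 = 1 := rfl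
lemma e01 : eZ 0 1 = 0 := rfl
lemma e10 : eZ 1 0 = 0 := rfl
lemma e11 : eZ 1 1 = 1 := rfl
lemma k00 : kdel (0 : Fin 2) 0 = 1 := rfl
lemma k01 : kdel (0 : Fin 2) 1 = 0 := rfl
lemma k10 : kdel (1 : Fin 2) 0 = 0 := rfl
lemma k11 : kdel (1 : Fin 2) 1 = 1 := rfl

/-- **The second-order coefficients of the star product with separation of variables on a
two-dimensional locally symmetric Kähler manifold** (Proposition on `T²` of the paper):
if the coefficients `T = T²` satisfy the second-order instance of the general recurrence
relation (with `T¹(e_a, e_b) = ℏ g a b`), the curvature has the Kähler symmetries, and the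
matrix `𝒞` is invertible, then the matrix `𝒯 = (T(α, β))` indexed by the weight-two
multi-indices `(2,0), (1,1), (0,2)` equals `ℏ² 𝔊 𝒞⁻¹`. -/
theorem two_dim_T2_matrix (ℏ : ℂ) (g : Fin 2 → Fin 2 → ℂ)
    (R : Fin 2 × Fin 2 × Fin 2 × Fin 2 → ℂ)
    (hR1 : ∀ p c d i : Fin 2, R (p, c, d, i) = R (i, c, d, p))
    (hR2 : ∀ p c d i : Fin 2, R (p, c, d, i) = R (p, d, c, i))
    (T : (Fin 2 → ℤ) → (Fin 2 → ℤ) → ℂ)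
    (hT0 : ∀ v w : Fin 2 → ℤ, ((∃ t, v t < 0) ∨ (∃ t, w t < 0)) → T v w = 0)
    (hrec : ∀ (i : Fin 2) (α β : Fin 2 → ℕ), α 0 + α 1 = 2 → β 0 + β 1 = 2 →
      (∑ d : Fin 2, ℏ * g d i *
          T1 ℏ g (fun t => (α t : ℤ) - eZ d t) (fun t => (β t : ℤ) - eZ i t)) =
        (β i : ℂ) * T (fun t => (α t : ℤ)) (fun t => (β t : ℤ)) +
        (∑ k : Fin 2, ∑ p : Fin 2,
          (ℏ / 2) * ((β k : ℂ) - kdel k p - kdel i k + 1) *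
            ((β k : ℂ) - kdel k p - kdel i k + 2) * R (p, k, k, i) *
            T (fun t => (α t : ℤ))
              (fun t => (β t : ℤ) - eZ p t + 2 * eZ k t - eZ i t)) +
        (∑ p : Fin 2,
          ℏ * ((β 0 : ℂ) - kdel 0 p - kdel i 0 + 1) *
            ((β 1 : ℂ) - kdel 1 p - kdel i 1 + 1) * R (p, 1, 0, i) *
            T (fun t => (α t : ℤ))
              (fun t => (β t : ℤ) - eZ p t + eZ 0 t + eZ 1 t - eZ i t)))
    (hC : IsUnit (matC ℏ R).det) :
    Matrix.of (fun a b : Fin 3 => T (m2 a) (m2 b)) =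
      ℏ ^ 2 • (matG g * (matC ℏ R)⁻¹) := by
  have z1 : ∀ v : Fin 2 → ℤ, T v ![3, -1] = 0 := fun v =>
    hT0 _ _ (Or.inr ⟨1, by norm_num⟩)
  have z2 : ∀ v : Fin 2 → ℤ, T v ![-1, 3] = 0 := fun v =>
    hT0 _ _ (Or.inr ⟨0, by norm_num⟩)
  have key : (Matrix.of fun a b : Fin 3 => T (m2 a) (m2 b)) * matC ℏ R =
      (ℏ ^ 2 : ℂ) • matG g := by
    ext a b
    fin_cases a <;> fin_cases b <;>
      [ (have h1 := hrec 0 ![2,0] ![2,0] (by norm_num) (by norm_num));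
        (have h1 := hrec 0 ![2,0] ![1,1] (by norm_num) (by norm_num));
        (have h1 := hrec 1 ![2,0] ![0,2] (by norm_num) (by norm_num));
        (have h1 := hrec 0 ![1,1] ![2,0] (by norm_num) (by norm_num));
        (have h1 := hrec 0 ![1,1] ![1,1] (by norm_num) (by norm_num));
        (have h1 := hrec 1 ![1,1] ![0,2] (by norm_num) (by norm_num));
        (have h1 := hrec 0 ![0,2] ![2,0] (by norm_num) (by norm_num));
        (have h1 := hrec 0 ![0,2] ![1,1] (by norm_num) (by norm_num));
        (have h1 := hrec 1 ![0,2] ![0,2] (by norm_num) (by norm_num))] <;>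
    · simp only [Fin.sum_univ_two, vV1, vV2, vV3, vV4] at h1
      norm_num [e00, e01, e10, e11, k00, k01, k10, k11, T1, funext_iff,
        Fin.forall_fin_two] at h1
      simp only [z1, z2] at h1
      norm_num [Matrix.mul_apply, Fin.sum_univ_three, Matrix.smul_apply, Matrix.of_apply,
        matC, matG, m2, Matrix.cons_val_two, Matrix.tail_cons, Matrix.head_cons]
      linear_combination -h1
  have hinv := Matrix.mul_nonsing_inv (matC ℏ R) hC
  calc Matrix.of (fun a b : Fin 3 => T (m2 a) (m2 b))
      = (Matrix.of fun a b : Fin 3 => T (m2 a) (m2 b)) * (matC ℏ R * (matC ℏ R)⁻¹) := by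
        rw [hinv, Matrix.mul_one]
    _ = ℏ ^ 2 • (matG g * (matC ℏ R)⁻¹) := by
        rw [← Matrix.mul_assoc, key, Matrix.smul_mul]
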